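/- Let P: ℝⁿ → ℝ be a non-constant polynomial with real coefficients and let f: ℝⁿ → ℝⁿ be a strictly contractive invertible affine map with fixed point z. Suppose z ∈ S(P) and there exists x ∈ ℝⁿ whose forward orbit {fⁿ(x) : n ∈ ℕ} is contained in S(P) and is not eventually periodic (the orbit is an infinite set). Then S(P) is unbounded. -/

import Mathlib

open Set

/-- `f : ℝⁿ → ℝⁿ` is an invertible, strictly contractive affine map
(its linear part is bijective and has operator norm `< 1`). -/
def IsAffineContraction {n : ℕ}
    (f : EuclideanSpace ℝ (Fin n) → EuclideanSpace ℝ (Fin n)) : Prop :=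
  ∃ (T : EuclideanSpace ℝ (Fin n) →L[ℝ] EuclideanSpace ℝ (Fin n))
    (b : EuclideanSpace ℝ (Fin n)),
    Function.Bijective T ∧ ‖T‖ < 1 ∧ ∀ x, f x = T x + b

/-- `E ⊆ ℝⁿ` is self-affine: it is nonempty, compact and is the attractor of an
affine iterated function system. -/
def IsSelfAffine {n : ℕ} (E : Set (EuclideanSpace ℝ (Fin n))) : Prop :=
  E.Nonempty ∧ IsCompact E ∧
    ∃ (ℓ : ℕ) (f : Fin ℓ → (EuclideanSpace ℝ (Fin n) → EuclideanSpace ℝ (Fin n))),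
      (∀ i, IsAffineContraction (f i)) ∧ E = ⋃ i, f i '' E


private lemma eval_comp_aeval' {n : ℕ} (g : Fin n → MvPolynomial (Fin n) ℝ)
    (Q : MvPolynomial (Fin n) ℝ) (v : Fin n → ℝ) :
    MvPolynomial.eval v (MvPolynomial.aeval g Q)
      = MvPolynomial.eval (fun i => MvPolynomial.eval v (g i)) Q := by
  have h := MvPolynomial.comp_aeval_apply (MvPolynomial.aeval (R := ℝ) v) Q (f := g)
  simpa [MvPolynomial.aeval_def, MvPolynomial.eval₂_id] using h

private lemma totalDegree_aeval_le' {n : ℕ} (g : Fin n → MvPolynomial (Fin n) ℝ)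
    (hg : ∀ i, (g i).totalDegree ≤ 1) (Q : MvPolynomial (Fin n) ℝ) :
    (MvPolynomial.aeval g Q).totalDegree ≤ Q.totalDegree := by
  open MvPolynomial in
  conv_lhs => rw [Q.as_sum]
  rw [map_sum]
  apply MvPolynomial.totalDegree_finsetSum_le
  intro m hm
  rw [MvPolynomial.aeval_monomial]
  refine (MvPolynomial.totalDegree_mul _ _).trans ?_
  have h1 : (algebraMap ℝ (MvPolynomial (Fin n) ℝ) (MvPolynomial.coeff m Q)).totalDegree = 0 := by
    simp [MvPolynomial.algebraMap_eq]
  rw [h1, zero_add]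
  refine (MvPolynomial.totalDegree_finset_prod _ _).trans ?_
  calc ∑ i ∈ m.support, ((g i) ^ m i).totalDegree
      ≤ ∑ i ∈ m.support, m i := by
        refine Finset.sum_le_sum fun i _ => ?_
        refine (MvPolynomial.totalDegree_pow _ _).trans ?_
        calc m i * (g i).totalDegree ≤ m i * 1 := Nat.mul_le_mul_left _ (hg i)
        _ = m i := Nat.mul_one _
    _ ≤ Q.totalDegree := MvPolynomial.le_totalDegree hm

private lemma coordT' {n : ℕ} (T : EuclideanSpace ℝ (Fin n) →L[ℝ] EuclideanSpace ℝ (Fin n))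
    (v : EuclideanSpace ℝ (Fin n)) (i : Fin n) :
    (T v) i = ∑ j, T (EuclideanSpace.single j (1:ℝ)) i * v j := by
  have hv : v = ∑ j, v j • EuclideanSpace.single j (1:ℝ) := by
    ext k
    rw [show ((∑ j : Fin n, v j • EuclideanSpace.single j (1:ℝ)) k)
        = EuclideanSpace.proj k (∑ j : Fin n, v j • EuclideanSpace.single j (1:ℝ)) from rfl,
      map_sum]
    simp [EuclideanSpace.single_apply]
  conv_lhs => rw [hv, map_sum]
  rw [show ((∑ x : Fin n, T (v x • EuclideanSpace.single x (1:ℝ))) i)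
      = EuclideanSpace.proj i (∑ x : Fin n, T (v x • EuclideanSpace.single x (1:ℝ))) from rfl,
    map_sum]
  simp [mul_comm]


/-- Let `P : ℝⁿ → ℝ` be a non-constant polynomial and let
`f : ℝⁿ → ℝⁿ` be a strictly contractive invertible affine map with fixed point `z`.
Suppose `z ∈ S(P)` and there exists `x ∈ ℝⁿ` whose forward orbit `{fᵏ x : k ∈ ℕ}` is
contained in `S(P)` and is an infinite set.  Then `S(P)` is unbounded. -/
theorem algebraic_surface_with_orbit_unbounded
    {n : ℕ} (P : MvPolynomial (Fin n) ℝ) (hP : P.totalDegree ≠ 0)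
    (f : EuclideanSpace ℝ (Fin n) → EuclideanSpace ℝ (Fin n))
    (hf : IsAffineContraction f)
    (z : EuclideanSpace ℝ (Fin n)) (hz : f z = z)
    (hzS : MvPolynomial.eval (fun i => z i) P = 0)
    (x : EuclideanSpace ℝ (Fin n))
    (horbit : ∀ k : ℕ, MvPolynomial.eval (fun i => (f^[k] x) i) P = 0)
    (hinf : (Set.range fun k : ℕ => f^[k] x).Infinite) :
    ¬ Bornology.IsBounded {y : EuclideanSpace ℝ (Fin n) |
      MvPolynomial.eval (fun i => y i) P = 0} := by
  intro hbd
  classical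
  obtain ⟨T, c, hTbij, hT1, hfx⟩ := hf
  have hfsurj : Function.Surjective f := by
    intro y
    obtain ⟨u, hu⟩ := hTbij.2 (y - c)
    exact ⟨u, by rw [hfx, hu, sub_add_cancel]⟩
  set g : Fin n → MvPolynomial (Fin n) ℝ := fun i =>
    MvPolynomial.C (c i)
      + ∑ j, MvPolynomial.C (T (EuclideanSpace.single j 1) i) * MvPolynomial.X j with hg
  set φ : MvPolynomial (Fin n) ℝ →ₐ[ℝ] MvPolynomial (Fin n) ℝ := MvPolynomial.aeval g with hφ
  have hgdeg : ∀ i, (g i).totalDegree ≤ 1 := by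
    intro i
    simp only [hg]
    refine (MvPolynomial.totalDegree_add _ _).trans (max_le (by simp) ?_)
    refine MvPolynomial.totalDegree_finsetSum_le fun j _ => ?_
    refine (MvPolynomial.totalDegree_mul _ _).trans ?_
    simp
  -- key evaluation identity
  have keval : ∀ (Q : MvPolynomial (Fin n) ℝ) (v : EuclideanSpace ℝ (Fin n)),
      MvPolynomial.eval (fun i => v i) (φ Q) = MvPolynomial.eval (fun i => (f v) i) Q := by
    intro Q v
    rw [hφ, eval_comp_aeval']
    have harg : (fun i => MvPolynomial.eval (fun i => v i) (g i)) = fun i => (f v) i := by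
      funext i
      rw [hfx]
      simp only [hg, map_add, MvPolynomial.eval_C, map_sum, MvPolynomial.eval_mul,
        MvPolynomial.eval_X]
      have h2 : (T v + c) i = (T v) i + c i := rfl
      rw [h2, coordT']
      ring
    rw [harg]
  have keval_iter : ∀ (k : ℕ) (Q : MvPolynomial (Fin n) ℝ) (v : EuclideanSpace ℝ (Fin n)),
      MvPolynomial.eval (fun i => v i) (φ^[k] Q)
        = MvPolynomial.eval (fun i => (f^[k] v) i) Q := by
    intro k
    induction k with
    | zero => intro Q v; rfl
    | succ k ih =>
      intro Q v
      rw [Function.iterate_succ_apply' (⇑φ), keval, ih, Function.iterate_succ_apply]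
  have hφinj : Function.Injective φ := by
    intro Q1 Q2 h
    apply MvPolynomial.funext
    intro w
    obtain ⟨v, hv⟩ := hfsurj (WithLp.toLp 2 w)
    have h2 := congrArg (MvPolynomial.eval (fun i => v i)) h
    rw [keval, keval] at h2
    simp only [hv] at h2
    exact h2
  have hdeg : ∀ k, (φ^[k] P).totalDegree ≤ P.totalDegree := by
    intro k
    induction k with
    | zero => exact le_rfl
    | succ k ih =>
      rw [Function.iterate_succ_apply' (⇑φ)]
      exact (totalDegree_aeval_le' g hgdeg _).trans ih
  set W : ℕ → Submodule ℝ (MvPolynomial (Fin n) ℝ) := fun k =>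
    Submodule.span ℝ (Set.range fun j : ℕ => φ^[k + j] P) with hW
  have hWmap : ∀ k, Submodule.map φ.toLinearMap (W k) = W (k + 1) := by
    intro k
    simp only [hW]
    rw [Submodule.map_span, ← Set.range_comp]
    have heq : (⇑φ.toLinearMap ∘ fun j : ℕ => φ^[k + j] P)
        = fun j : ℕ => φ^[k + 1 + j] P := by
      funext j
      show φ (φ^[k + j] P) = φ^[k + 1 + j] P
      rw [show k + 1 + j = (k + j) + 1 from by omega, Function.iterate_succ_apply' (⇑φ)]
    rw [heq]
  have hWanti : ∀ k, W (k + 1) ≤ W k := by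
    intro k
    simp only [hW]
    apply Submodule.span_le.mpr
    rintro q ⟨j, rfl⟩
    refine Submodule.subset_span ⟨j + 1, ?_⟩
    show φ^[k + (j + 1)] P = φ^[k + 1 + j] P
    rw [show k + (j + 1) = k + 1 + j from by omega]
  have hWfd : ∀ k, FiniteDimensional ℝ (W k) := by
    intro k
    have hle : W k ≤ MvPolynomial.restrictTotalDegree (Fin n) ℝ P.totalDegree := by
      simp only [hW]
      apply Submodule.span_le.mpr
      rintro q ⟨j, rfl⟩
      simp only [SetLike.mem_coe, MvPolynomial.mem_restrictTotalDegree]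
      exact hdeg _
    exact Submodule.finiteDimensional_of_le hle
  have hstab : ∃ k, W k = W (k + 1) := by
    have hmem : sInf (Set.range fun k => Module.finrank ℝ (W k))
        ∈ Set.range fun k => Module.finrank ℝ (W k) :=
      Nat.sInf_mem ⟨Module.finrank ℝ (W 0), 0, rfl⟩
    obtain ⟨k, hk0⟩ := hmem
    have hk : Module.finrank ℝ (W k)
        = sInf (Set.range fun k => Module.finrank ℝ (W k)) := hk0
    refine ⟨k, ?_⟩
    haveI := hWfd k
    have h1 : Module.finrank ℝ (W (k + 1)) ≤ Module.finrank ℝ (W k) :=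
      Submodule.finrank_mono (hWanti k)
    have h2 : Module.finrank ℝ (W k) ≤ Module.finrank ℝ (W (k + 1)) := by
      rw [hk]
      exact Nat.sInf_le ⟨k + 1, rfl⟩
    exact (Submodule.eq_of_le_of_finrank_le (hWanti k) (le_antisymm h1 h2).ge).symm
  obtain ⟨k0, hk0⟩ := hstab
  have hφinjL : Function.Injective (⇑φ.toLinearMap) := fun p q h => hφinj h
  have hdown : ∀ i, W (k0 - i) = W (k0 - i + 1) := by
    intro i
    induction i with
    | zero => simpa using hk0
    | succ i ih =>
      rcases le_or_gt k0 i with h | h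
      · rw [show k0 - (i + 1) = k0 - i from by omega]; exact ih
      · apply Submodule.map_injective_of_injective hφinjL
        rw [hWmap, hWmap, show k0 - (i + 1) + 1 = k0 - i from by omega]
        exact ih
  have hW01 : W 0 = W 1 := by
    have := hdown k0
    rwa [Nat.sub_self] at this
  have hPW1 : P ∈ W 1 := by
    rw [← hW01]
    exact Submodule.subset_span ⟨0, by simp⟩
  have haeval_eq : ∀ (w : Fin n → ℝ) (q : MvPolynomial (Fin n) ℝ),
      MvPolynomial.aeval w q = MvPolynomial.eval w q := fun w q => by
    simp [MvPolynomial.aeval_def, MvPolynomial.eval₂_id]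
  have hPzero : ∀ v : EuclideanSpace ℝ (Fin n),
      (∀ m : ℕ, MvPolynomial.eval (fun i => v i) (φ^[m + 1] P) = 0) →
      MvPolynomial.eval (fun i => v i) P = 0 := by
    intro v hv
    have hker : W 1 ≤ LinearMap.ker
        (MvPolynomial.aeval (R := ℝ) (fun i => v i)).toLinearMap := by
      simp only [hW]
      apply Submodule.span_le.mpr
      rintro q ⟨j, rfl⟩
      simp only [SetLike.mem_coe, LinearMap.mem_ker, AlgHom.toLinearMap_apply]
      rw [haeval_eq, show 1 + j = j + 1 from by omega]
      exact hv j
    have h3 := hker hPW1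
    rw [LinearMap.mem_ker, AlgHom.toLinearMap_apply, haeval_eq] at h3
    exact h3
  set finv := Function.invFun f with hfinv
  have hfr : ∀ y, f (finv y) = y := fun y => Function.rightInverse_invFun hfsurj y
  have hZstep : ∀ v : EuclideanSpace ℝ (Fin n),
      (∀ k, MvPolynomial.eval (fun i => v i) (φ^[k] P) = 0) →
      (∀ k, MvPolynomial.eval (fun i => (finv v) i) (φ^[k] P) = 0) := by
    intro v hv
    have haux : ∀ m : ℕ,
        MvPolynomial.eval (fun i => (finv v) i) (φ^[m + 1] P) = 0 := by
      intro m
      rw [keval_iter]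
      simp only [Function.iterate_succ_apply, hfr]
      rw [← keval_iter]
      exact hv m
    intro k
    cases k with
    | zero => simpa using hPzero (finv v) haux
    | succ m => exact haux m
  have hxZ : ∀ m k,
      MvPolynomial.eval (fun i => (f^[m] x) i) (φ^[k] P) = 0 := by
    intro m k
    rw [keval_iter]
    simp only [← Function.iterate_add_apply]
    exact horbit (k + m)
  obtain ⟨a, ha, b, hb, hab⟩ := hinf.nontrivial
  obtain ⟨ma, hma⟩ := ha
  obtain ⟨mb, hmb⟩ := hb
  have hma' : f^[ma] x = a := hma
  have hmb' : f^[mb] x = b := hmb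
  have hab' : f^[ma] x ≠ f^[mb] x := by rw [hma', hmb']; exact hab
  have hcontr : ∀ u w : EuclideanSpace ℝ (Fin n),
      dist (f u) (f w) ≤ ‖T‖ * dist u w := by
    intro u w
    rw [hfx u, hfx w, dist_eq_norm, dist_eq_norm]
    have h1 : T u + c - (T w + c) = T (u - w) := by rw [map_sub]; abel
    rw [h1]
    exact T.le_opNorm _
  have hTpos : 0 < ‖T‖ := by
    rcases eq_or_lt_of_le (norm_nonneg T) with h | h
    · exfalso
      have hzero : ∀ u : EuclideanSpace ℝ (Fin n), T u = 0 := by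
        intro u
        have h1 := T.le_opNorm u
        rw [← h, zero_mul] at h1
        exact norm_le_zero_iff.mp h1
      exact hab' (hTbij.1 ((hzero _).trans (hzero _).symm))
    · exact h
  set A := f^[ma] x with hA
  set B := f^[mb] x with hB
  have hiter : ∀ k,
      (∀ j, MvPolynomial.eval (fun i => (finv^[k] A) i) (φ^[j] P) = 0) ∧
      (∀ j, MvPolynomial.eval (fun i => (finv^[k] B) i) (φ^[j] P) = 0) ∧
      dist A B / ‖T‖ ^ k ≤ dist (finv^[k] A) (finv^[k] B) := by
    intro k
    induction k with
    | zero =>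
      refine ⟨hxZ ma, hxZ mb, ?_⟩
      simp only [Function.iterate_zero_apply, pow_zero, div_one]
      exact le_rfl
    | succ k ih =>
      obtain ⟨hZA, hZB, hd⟩ := ih
      have hstepA := hZstep _ hZA
      have hstepB := hZstep _ hZB
      refine ⟨?_, ?_, ?_⟩
      · intro j
        rw [Function.iterate_succ_apply' finv]
        exact hstepA j
      · intro j
        rw [Function.iterate_succ_apply' finv]
        exact hstepB j
      · have h1 : dist (finv^[k] A) (finv^[k] B)
            ≤ ‖T‖ * dist (finv^[k + 1] A) (finv^[k + 1] B) := by
          have h2 := hcontr (finv^[k + 1] A) (finv^[k + 1] B)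
          simp only [Function.iterate_succ_apply' finv, hfr] at h2
          simpa only [Function.iterate_succ_apply' finv] using h2
        rw [pow_succ, ← div_div, div_le_iff₀ hTpos]
        calc dist A B / ‖T‖ ^ k ≤ dist (finv^[k] A) (finv^[k] B) := hd
        _ ≤ ‖T‖ * dist (finv^[k + 1] A) (finv^[k + 1] B) := h1
        _ = dist (finv^[k + 1] A) (finv^[k + 1] B) * ‖T‖ := mul_comm _ _
  obtain ⟨C, hC⟩ := Metric.isBounded_iff.mp hbd
  have hmemS : ∀ v : EuclideanSpace ℝ (Fin n),
      (∀ j, MvPolynomial.eval (fun i => v i) (φ^[j] P) = 0) →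
      v ∈ {y : EuclideanSpace ℝ (Fin n) | MvPolynomial.eval (fun i => y i) P = 0} := by
    intro v hv
    have := hv 0
    simpa using this
  have hABpos : 0 < dist A B := dist_pos.mpr hab'
  have hCge : dist A B ≤ C := hC (hmemS _ (hxZ ma)) (hmemS _ (hxZ mb))
  have hC1 : (0:ℝ) < C + 1 := by linarith
  obtain ⟨k, hk⟩ := exists_pow_lt_of_lt_one (div_pos hABpos hC1) hT1
  obtain ⟨hZA, hZB, hd⟩ := hiter k
  have h3 : dist A B / ‖T‖ ^ k ≤ C := le_trans hd (hC (hmemS _ hZA) (hmemS _ hZB))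
  have hTk : (0:ℝ) < ‖T‖ ^ k := pow_pos hTpos k
  have h4 : ‖T‖ ^ k * (C + 1) < dist A B := (lt_div_iff₀ hC1).mp hk
  have h5 : C + 1 < dist A B / ‖T‖ ^ k := by
    rw [lt_div_iff₀ hTk, mul_comm]
    exact h4
  linarith
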